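/- In any category, consider morphisms u₁, v₁ : C₁ → X₁, u₂, v₂ : C₂ → X₂, e : C₁ → C₂, f : X₁ → X₂, q₁ : X₁ → Q₁, q₂ : X₂ → Q₂, g : Q₁ → Q₂ satisfying f ∘ u₁ = u₂ ∘ e, f ∘ v₁ = v₂ ∘ e, and g ∘ q₁ = q₂ ∘ f. If q₁ is a coequaliser of u₁ and v₁, and e is an epimorphism, then the square with sides f, q₁, q₂, g is a pushout if and only if q₂ is a coequaliser of u₂ and v₂. -/

import Mathlib

open CategoryTheory CategoryTheory.Limits

universe v u

variable {C : Type u} [Category.{v} C]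

/-- `i₁ : X₁ ⟶ X` and `i₂ : X₂ ⟶ X` form a binary coproduct diagram. -/
def IsCoprodDiagram {X₁ X₂ X : C} (i₁ : X₁ ⟶ X) (i₂ : X₂ ⟶ X) : Prop :=
  Nonempty (IsColimit (BinaryCofan.mk i₁ i₂))

/-- `p₁ : X ⟶ X₁` and `p₂ : X ⟶ X₂` form a binary product diagram. -/
def IsProdDiagram {X X₁ X₂ : C} (p₁ : X ⟶ X₁) (p₂ : X ⟶ X₂) : Prop :=
  Nonempty (IsLimit (BinaryFan.mk p₁ p₂))

/-- Condition (E1): pullbacks of `f` along both inclusions of any binary coproduct diagram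
exist and the resulting legs form a binary coproduct diagram. -/
def SatE1 {A X : C} (f : A ⟶ X) : Prop :=
  ∀ {X₁ X₂ : C} (x₁ : X₁ ⟶ X) (x₂ : X₂ ⟶ X), IsCoprodDiagram x₁ x₂ →
    ∃ (A₁ A₂ : C) (a₁ : A₁ ⟶ A) (a₂ : A₂ ⟶ A) (f₁ : A₁ ⟶ X₁) (f₂ : A₂ ⟶ X₂),
      IsPullback a₁ f₁ f x₁ ∧ IsPullback a₂ f₂ f x₂ ∧ IsCoprodDiagram a₁ a₂

/-- Condition (E2): in any commutative diagram over `f` whose rows are binary coproduct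
diagrams, both squares are pullbacks. -/
def SatE2 {A X : C} (f : A ⟶ X) : Prop :=
  ∀ {A₁ A₂ X₁ X₂ : C} (a₁ : A₁ ⟶ A) (a₂ : A₂ ⟶ A) (x₁ : X₁ ⟶ X) (x₂ : X₂ ⟶ X)
    (f₁ : A₁ ⟶ X₁) (f₂ : A₂ ⟶ X₂),
    a₁ ≫ f = f₁ ≫ x₁ → a₂ ≫ f = f₂ ≫ x₂ →
    IsCoprodDiagram x₁ x₂ → IsCoprodDiagram a₁ a₂ →
    IsPullback a₁ f₁ f x₁ ∧ IsPullback a₂ f₂ f x₂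

/-- A morphism is extensive if it satisfies (E1) and (E2). -/
def Extensive {A X : C} (f : A ⟶ X) : Prop := SatE1 f ∧ SatE2 f

/-- Condition (C1): pushouts of `f` along both projections of any binary product diagram
exist and the resulting legs form a binary product diagram. -/
def SatC1 {A X : C} (f : A ⟶ X) : Prop :=
  ∀ {A₁ A₂ : C} (p₁ : A ⟶ A₁) (p₂ : A ⟶ A₂), IsProdDiagram p₁ p₂ →
    ∃ (X₁ X₂ : C) (q₁ : X ⟶ X₁) (q₂ : X ⟶ X₂) (f₁ : A₁ ⟶ X₁) (f₂ : A₂ ⟶ X₂),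
      IsPushout p₁ f f₁ q₁ ∧ IsPushout p₂ f f₂ q₂ ∧ IsProdDiagram q₁ q₂

/-- Condition (C2): in any commutative diagram over `f` whose rows are binary product
diagrams, both squares are pushouts. -/
def SatC2 {A X : C} (f : A ⟶ X) : Prop :=
  ∀ {A₁ A₂ X₁ X₂ : C} (p₁ : A ⟶ A₁) (p₂ : A ⟶ A₂) (q₁ : X ⟶ X₁) (q₂ : X ⟶ X₂)
    (f₁ : A₁ ⟶ X₁) (f₂ : A₂ ⟶ X₂),
    p₁ ≫ f₁ = f ≫ q₁ → p₂ ≫ f₂ = f ≫ q₂ →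
    IsProdDiagram p₁ p₂ → IsProdDiagram q₁ q₂ →
    IsPushout p₁ f f₁ q₁ ∧ IsPushout p₂ f f₂ q₂

/-- A morphism is coextensive if it satisfies (C1) and (C2). -/
def Coextensive {A X : C} (f : A ⟶ X) : Prop := SatC1 f ∧ SatC2 f

/-- A coproduct inclusion: a morphism admitting a complementary inclusion forming
a binary coproduct diagram. -/
def IsCoprodInclusion {A X : C} (ι : A ⟶ X) : Prop :=
  ∃ (A' : C) (ι' : A' ⟶ X), IsCoprodDiagram ι ι'

/-- An extremal epimorphism: whenever `e = i ≫ m` with `m` a monomorphism, `m` is an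
isomorphism. -/
def IsExtremalEpi {A B : C} (e : A ⟶ B) : Prop :=
  ∀ {I : C} (i : A ⟶ I) (m : I ⟶ B), Mono m → i ≫ m = e → IsIso m

/-- The binary strict refinement property for an object `X`. -/
def BinaryStrictRefinement (X : C) : Prop :=
  ∀ {A₁ A₂ B₁ B₂ : C} (a₁ : X ⟶ A₁) (a₂ : X ⟶ A₂) (b₁ : X ⟶ B₁) (b₂ : X ⟶ B₂),
    IsProdDiagram a₁ a₂ → IsProdDiagram b₁ b₂ →
    ∃ (C₁₁ C₁₂ C₂₁ C₂₂ : C)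
      (α₁₁ : A₁ ⟶ C₁₁) (α₁₂ : A₁ ⟶ C₁₂) (α₂₁ : A₂ ⟶ C₂₁) (α₂₂ : A₂ ⟶ C₂₂)
      (β₁₁ : B₁ ⟶ C₁₁) (β₁₂ : B₂ ⟶ C₁₂) (β₂₁ : B₁ ⟶ C₂₁) (β₂₂ : B₂ ⟶ C₂₂),
      a₁ ≫ α₁₁ = b₁ ≫ β₁₁ ∧ a₁ ≫ α₁₂ = b₂ ≫ β₁₂ ∧
      a₂ ≫ α₂₁ = b₁ ≫ β₂₁ ∧ a₂ ≫ α₂₂ = b₂ ≫ β₂₂ ∧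
      IsProdDiagram α₁₁ α₁₂ ∧ IsProdDiagram α₂₁ α₂₂ ∧
      IsProdDiagram β₁₁ β₂₁ ∧ IsProdDiagram β₁₂ β₂₂

/-- A jointly monomorphic pair which is a reflexive, symmetric and transitive relation. -/
def IsEquivalenceRelationPair {R X : C} (r₁ r₂ : R ⟶ X) : Prop :=
  (∀ {T : C} (a b : T ⟶ R), a ≫ r₁ = b ≫ r₁ → a ≫ r₂ = b ≫ r₂ → a = b) ∧
  (∃ d : X ⟶ R, d ≫ r₁ = 𝟙 X ∧ d ≫ r₂ = 𝟙 X) ∧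
  (∃ s : R ⟶ R, s ≫ r₁ = r₂ ∧ s ≫ r₂ = r₁) ∧
  (∀ {P : C} (p₁ p₂ : P ⟶ R), IsPullback p₁ p₂ r₂ r₁ →
    ∃ t : P ⟶ R, t ≫ r₁ = p₁ ≫ r₁ ∧ t ≫ r₂ = p₂ ≫ r₂)

/-- The common-coequaliser lemma: given the commutative ladder with `q₁` a coequaliser of
`u₁, v₁` and `e` an epimorphism, the right-hand square is a pushout iff `q₂` is a
coequaliser of `u₂, v₂`. -/
theorem pushout_iff_coequalizer {W₁ W₂ X₁ X₂ Q₁ Q₂ : C}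
    (u₁ v₁ : W₁ ⟶ X₁) (u₂ v₂ : W₂ ⟶ X₂) (e : W₁ ⟶ W₂) (f : X₁ ⟶ X₂)
    (q₁ : X₁ ⟶ Q₁) (q₂ : X₂ ⟶ Q₂) (g : Q₁ ⟶ Q₂)
    (hu : u₁ ≫ f = e ≫ u₂) (hv : v₁ ≫ f = e ≫ v₂) (hsq : q₁ ≫ g = f ≫ q₂)
    (hw₁ : u₁ ≫ q₁ = v₁ ≫ q₁)
    (hq₁ : Nonempty (IsColimit (Cofork.ofπ q₁ hw₁)))
    (he : Epi e) :
    IsPushout q₁ f g q₂ ↔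
      ∃ (w : u₂ ≫ q₂ = v₂ ≫ q₂), Nonempty (IsColimit (Cofork.ofπ q₂ w)) := by
  obtain ⟨hq⟩ := hq₁
  have hepi1 : Epi q₁ :=
    ⟨fun k l hkl => Cofork.IsColimit.hom_ext hq (by simpa using hkl)⟩
  have w : u₂ ≫ q₂ = v₂ ≫ q₂ := by
    rw [← cancel_epi e]
    simp only [← Category.assoc, ← hu, ← hv]
    simp only [Category.assoc, ← hsq]
    simp only [← Category.assoc, hw₁]
  constructor
  · intro hpo
    refine ⟨w, ⟨Cofork.IsColimit.mk _
      (fun s => hpo.desc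
        (Cofork.IsColimit.desc hq (f ≫ s.π)
          (by rw [← Category.assoc, hu, ← Category.assoc, hv,
                Category.assoc, Category.assoc, s.condition]))
        s.π (show q₁ ≫ _ = f ≫ s.π from Cofork.IsColimit.π_desc' hq _ _)) (fun s => ?_) (fun s m hm => ?_)⟩⟩
    · exact hpo.inr_desc _ _ _
    · apply hpo.hom_ext
      · rw [← cancel_epi q₁, ← Category.assoc, hsq, ← Category.assoc, hsq,
          Category.assoc, Category.assoc, hpo.inr_desc,
          show q₂ ≫ m = Cofork.π s from hm]
      · rw [hpo.inr_desc]; exact hm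
  · rintro ⟨w', ⟨hc⟩⟩
    have hws : ∀ s : PushoutCocone q₁ f, u₂ ≫ s.inr = v₂ ≫ s.inr := fun s => by
      rw [← cancel_epi e]
      simp only [← Category.assoc, ← hu, ← hv]
      simp only [Category.assoc, ← s.condition]
      simp only [← Category.assoc, hw₁]
    exact IsPushout.of_isColimit (PushoutCocone.IsColimit.mk hsq
      (fun s => Cofork.IsColimit.desc hc s.inr (hws s))
      (fun s => by
        have hπ : q₂ ≫ Cofork.IsColimit.desc hc s.inr (hws s) = s.inr :=
          Cofork.IsColimit.π_desc' hc _ _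
        rw [← cancel_epi q₁, ← Category.assoc, hsq, Category.assoc, hπ, ← s.condition])
      (fun s => Cofork.IsColimit.π_desc' hc _ _)
      (fun s m h1 h2 => Cofork.IsColimit.hom_ext hc
        (h2.trans (Cofork.IsColimit.π_desc' hc _ _).symm)))
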